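/- arXiv:1101.3629 — 7 statements merged into one kernel-verified Lean document; each statement's English description precedes it below -/
import Mathlib

section
/- If S ⊆ (Fin q ⊕ {*})^n is an H(n,q,w,t) design and R ⊆ (Fin q')^w is an MDS code with distance w−t+1 (i.e., an H(w,q',w,t) design), then the set T of words in (Fin (q·q') ⊕ {*})^n obtained by pairing each codeword a ∈ S with each b ∈ R — placing the pair (a_i, b_j) in the i-th position where j indexes the non-star positions of a in order, and keeping * in the star positions of a — is an H(n,q·q',w,t) design. -/
/-- Weight of a word over `Option α`: number of non-star (non-`none`) positions. -/
def wt {n : ℕ} {α : Type*} (u : Fin n → Option α) : ℕ :=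
  (Finset.univ.filter fun i => ((u i).isSome : Prop)).card

/-- `SubFace v u` : the face of `v` is contained in the face of `u`, i.e. `v` agrees with `u`
on all non-star positions of `u`. -/
def SubFace {n : ℕ} {α : Type*} (v u : Fin n → Option α) : Prop :=
  ∀ i, ((u i).isSome : Prop) → v i = u i

/-- `H(n,q,w,t)` design over alphabet `α` (with `q = #α`): a set of weight-`w` words such that
every weight-`t` word contains exactly one of them. -/
def IsH (n w t : ℕ) (α : Type*) (S : Set (Fin n → Option α)) : Prop :=
  (∀ s ∈ S, wt s = w) ∧
  ∀ u : Fin n → Option α, wt u = t → ∃! s, s ∈ S ∧ SubFace s u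

/-- `A(n,q,w,t)` design over alphabet `α`: a set of weight-`t` words such that every
weight-`w` word is contained in exactly one of them. -/
def IsA (n w t : ℕ) (α : Type*) (S : Set (Fin n → Option α)) : Prop :=
  (∀ s ∈ S, wt s = t) ∧
  ∀ v : Fin n → Option α, wt v = w → ∃! s, s ∈ S ∧ SubFace v s

/-- Pairing construction: given a word `a` of weight `m` over `Option (Fin q)` and a tuple
`b : Fin m → Fin q'`, place the pair `(a i, b j)` (encoded in `Fin (q*q')`) at the `i`-th
non-star position of `a`, where `j` is the rank of `i` among the non-star positions of `a`. -/
noncomputable def pairWord {n q q' m : ℕ} (a : Fin n → Option (Fin q))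
    (b : Fin m → Fin q') (h : wt a = m) : Fin n → Option (Fin (q * q')) :=
  fun i =>
    if hi : ((a i).isSome : Prop) then
      some (finProdFinEquiv ((a i).get hi,
        b (((Finset.univ.filter fun j => ((a j).isSome : Prop)).orderIsoOfFin h).symm
          ⟨i, Finset.mem_filter.mpr ⟨Finset.mem_univ i, hi⟩⟩)))
    else none

lemma pairWord_isSome {n q q' m : ℕ} (a : Fin n → Option (Fin q))
    (b : Fin m → Fin q') (h : wt a = m) (i : Fin n) :
    ((pairWord a b h i).isSome : Prop) ↔ ((a i).isSome : Prop) := by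
  unfold pairWord
  by_cases hi : ((a i).isSome : Prop) <;> simp [hi]

lemma wt_pairWord {n q q' m : ℕ} (a : Fin n → Option (Fin q))
    (b : Fin m → Fin q') (h : wt a = m) : wt (pairWord a b h) = wt a := by
  unfold wt; congr 1; ext i; simp [Finset.mem_filter, pairWord_isSome]

lemma proj1_pairWord {n q q' m : ℕ} (a : Fin n → Option (Fin q))
    (b : Fin m → Fin q') (h : wt a = m) (i : Fin n) :
    Option.map (fun x : Fin (q * q') => (finProdFinEquiv.symm x).1) (pairWord a b h i) = a i := by
  unfold pairWord
  by_cases hi : ((a i).isSome : Prop)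
  · rw [dif_pos hi]
    simp only [Option.map_some, Equiv.symm_apply_apply, Option.some_get]
  · rw [dif_neg hi]
    simp [Option.not_isSome_iff_eq_none.mp hi]

lemma wt_map {n : ℕ} {α β : Type*} (f : α → β) (u : Fin n → Option α) :
    wt (fun i => Option.map f (u i)) = wt u := by
  unfold wt; congr 1; ext i; simp
theorem construction_I (n q q' w t : ℕ) (hwn : w ≤ n) (htw : t ≤ w) (ht : 1 ≤ t)
    (hq : 1 ≤ q) (hq' : 1 ≤ q')
    (S : Set (Fin n → Option (Fin q))) (hS : IsH n w t (Fin q) S)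
    (R : Set (Fin w → Fin q'))
    (hR : IsH w w t (Fin q') ((fun b => fun i => some (b i)) '' R)) :
    IsH n w t (Fin (q * q'))
      {c | ∃ a ∈ S, ∃ b ∈ R, ∃ h : wt a = w, c = pairWord a b h} := by
  obtain ⟨hSw, hSu⟩ := hS
  obtain ⟨hRw, hRu⟩ := hR
  constructor
  · rintro s ⟨a, ha, b, hb, h, rfl⟩
    rw [wt_pairWord]; exact h
  · intro u hu
    set u1 : Fin n → Option (Fin q) :=
      fun i => Option.map (fun x => (finProdFinEquiv.symm x).1) (u i) with hu1def
    have hu1 : wt u1 = t := by rw [hu1def, wt_map, hu]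
    obtain ⟨a, ⟨haS, haSub⟩, haUniq⟩ := hSu u1 hu1
    have haw : wt a = w := hSw a haS
    set e := (Finset.univ.filter fun j => ((a j).isSome : Prop)).orderIsoOfFin haw with he
    have hsupp : ∀ i, ((u i).isSome : Prop) → ((a i).isSome : Prop) := by
      intro i hi
      have h1 : ((u1 i).isSome : Prop) := by simp [hu1def, hi]
      have := haSub i h1
      rw [this]; exact h1
    set v : Fin w → Option (Fin q') :=
      fun j => Option.map (fun x => (finProdFinEquiv.symm x).2) (u (e j)) with hv
    have hvsome : ∀ j, ((v j).isSome : Prop) ↔ ((u (e j)).isSome : Prop) := by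
      intro j; simp [hv]
    have hvt : wt v = t := by
      rw [← hu]
      unfold wt
      refine Finset.card_bij' (fun j _ => ((e j : Fin n)))
        (fun i hi => e.symm ⟨i, Finset.mem_filter.mpr
          ⟨Finset.mem_univ i, hsupp i (Finset.mem_filter.mp hi).2⟩⟩) ?_ ?_ ?_ ?_
      · intro j hj
        simp only [Finset.mem_filter, Finset.mem_univ, true_and] at hj ⊢
        exact (hvsome j).mp hj
      · intro i hi
        simp only [Finset.mem_filter, Finset.mem_univ, true_and] at hi ⊢
        rw [hvsome, OrderIso.apply_symm_apply]
        exact hi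
      · intro j hj
        exact e.symm_apply_apply j
      · intro i hi
        simp only [OrderIso.apply_symm_apply]
    obtain ⟨s', ⟨⟨b, hbR, rfl⟩, hbSub⟩, hbUniq⟩ := hRu v hvt
    -- key agreement fact: for a' ∈ S with SubFace a' u1 (hence a' = a) and pairWord subface
    have key : ∀ (bb : Fin w → Fin q') (hh : wt a = w) i (hi : ((u i).isSome : Prop)),
        pairWord a bb hh i = u i ↔
        bb (e.symm ⟨i, Finset.mem_filter.mpr ⟨Finset.mem_univ i, hsupp i hi⟩⟩)
          = (finProdFinEquiv.symm ((u i).get hi)).2 := by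
      intro bb hh i hi
      have hai : ((a i).isSome : Prop) := hsupp i hi
      have ha1 : (a i).get hai = (finProdFinEquiv.symm ((u i).get hi)).1 := by
        have := haSub i (by simp [hu1def, hi])
        rw [hu1def] at this
        obtain ⟨x, hx⟩ := Option.isSome_iff_exists.mp hi
        simp [hx] at this ⊢
        simp [this, hx]
      constructor
      · intro hpw
        rw [pairWord, dif_pos hai] at hpw
        obtain ⟨x, hx⟩ := Option.isSome_iff_exists.mp hi
        rw [hx] at hpw
        have := Option.some_injective _ hpw
        have h2 := congrArg (fun y => (finProdFinEquiv.symm y).2) this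
        simp only [Equiv.symm_apply_apply] at h2
        simpa [hx] using h2
      · intro hb2
        rw [pairWord, dif_pos hai, ha1, hb2]
        obtain ⟨x, hx⟩ := Option.isSome_iff_exists.mp hi
        simp only [hx, Option.get_some, Prod.mk.eta, Equiv.apply_symm_apply]
    refine ⟨pairWord a b haw, ⟨⟨a, haS, b, hbR, haw, rfl⟩, ?_⟩, ?_⟩
    · intro i hi
      rw [key b haw i hi]
      have hvj : ((v (e.symm ⟨i, Finset.mem_filter.mpr
          ⟨Finset.mem_univ i, hsupp i hi⟩⟩)).isSome : Prop) := by
        rw [hvsome]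
        simpa using hi
      have := hbSub _ hvj
      rw [hv] at this
      simp only [OrderIso.apply_symm_apply] at this
      obtain ⟨x, hx⟩ := Option.isSome_iff_exists.mp hi
      simp only [hx, Option.map_some] at this
      simp [hx]
      exact Option.some_injective _ this
    · rintro s ⟨⟨a', ha'S, b', hb'R, h', rfl⟩, hsub⟩
      have ha'a : a' = a := by
        apply haUniq
        refine ⟨ha'S, ?_⟩
        intro i hi1
        have hi : ((u i).isSome : Prop) := by
          rw [hu1def] at hi1; simpa using hi1
        have := hsub i hi
        calc a' i = Option.map (fun x : Fin (q * q') => (finProdFinEquiv.symm x).1)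
              (pairWord a' b' h' i) := (proj1_pairWord a' b' h' i).symm
          _ = u1 i := by rw [this, hu1def]
      subst ha'a
      have hb'b : b' = b := by
        have : (fun j => some (b' j)) = (fun j => some (b j)) := by
          apply hbUniq
          refine ⟨⟨b', hb'R, rfl⟩, ?_⟩
          intro j hj
          have huj : ((u (e j)).isSome : Prop) := (hvsome j).mp hj
          have hpw := hsub (e j) huj
          rw [key b' h' (e j) huj] at hpw
          have hnat : (⟨(e j : Fin n), Finset.mem_filter.mpr
              ⟨Finset.mem_univ _, hsupp _ huj⟩⟩ : {x // x ∈ _}) = e j := rfl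
          rw [hnat, OrderIso.symm_apply_apply] at hpw
          show some (b' j) = v j
          rw [hv]
          obtain ⟨x, hx⟩ := Option.isSome_iff_exists.mp huj
          simp only [hx, Option.map_some]
          simp only [hx, Option.get_some] at hpw
          rw [hpw]
        funext j
        exact Option.some_injective _ (congrFun this j)
      subst hb'b
      rfl
end

section
/- If S is an A(n,q,n−1,n−2) design, then V = (S × (Fin q)^n) ∪ ((Fin q)^n × S), viewed as a set of words of weight 2n−2 in (Fin q ∪ {*})^{2n} by concatenation (full words in (Fin q)^n have weight n), is an A(2n,q,2n−1,2n−2) design. -/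
lemma wt_append {m n : ℕ} {α : Type*} (u : Fin m → Option α) (v : Fin n → Option α) :
    wt (Fin.append u v) = wt u + wt v := by
  rw [wt, Finset.card_filter, Fin.sum_univ_add]
  simp only [Fin.append_left, Fin.append_right]
  rw [wt, wt, Finset.card_filter, Finset.card_filter]

lemma wt_split {n : ℕ} {α : Type*} (v : Fin (n + n) → Option α) :
    wt v = wt (fun i => v (Fin.castAdd n i)) + wt (fun i => v (Fin.natAdd n i)) := by
  rw [wt, Finset.card_filter, Fin.sum_univ_add]
  rw [wt, wt, Finset.card_filter, Finset.card_filter]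

lemma all_isSome_of_wt {n : ℕ} {α : Type*} (u : Fin n → Option α) (h : wt u = n) :
    ∀ i, (u i).isSome := by
  intro i
  have he : (Finset.univ.filter fun i => ((u i).isSome : Prop)) = Finset.univ := by
    apply Finset.eq_univ_of_card
    rw [← wt] at *; simpa using h
  have := Finset.mem_filter.mp (he ▸ Finset.mem_univ i)
  exact this.2

lemma wt_le {n : ℕ} {α : Type*} (u : Fin n → Option α) : wt u ≤ n := by
  refine le_trans (Finset.card_filter_le _ _) (by simp)

lemma wt_of_all_isSome {n : ℕ} {α : Type*} (u : Fin n → Option α)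
    (h : ∀ i, (u i).isSome) : wt u = n := by
  rw [wt, Finset.filter_true_of_mem (fun i _ => h i), Finset.card_univ, Fintype.card_fin]

lemma wt_full {n q : ℕ} (d : Fin n → Fin q) : wt (fun i => some (d i)) = n :=
  wt_of_all_isSome _ (fun _ => rfl)

theorem construction_III (n q : ℕ) (hn : 2 ≤ n) (hq : 1 ≤ q)
    (S : Set (Fin n → Option (Fin q))) (hS : IsA n (n - 1) (n - 2) (Fin q) S) :
    IsA (n + n) (2 * n - 1) (2 * n - 2) (Fin q)
      {v | (∃ a ∈ S, ∃ d : Fin n → Fin q, v = Fin.append a fun i => some (d i)) ∨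
           (∃ a ∈ S, ∃ d : Fin n → Fin q, v = Fin.append (fun i => some (d i)) a)} := by
  obtain ⟨hSwt, hScov⟩ := hS
  constructor
  · rintro s (⟨a, haS, d, rfl⟩ | ⟨a, haS, d, rfl⟩) <;>
      rw [wt_append, wt_full, hSwt a haS] <;> omega
  · intro v hv
    have hsplit := wt_split v
    have hL := wt_le (fun i => v (Fin.castAdd n i))
    have hR := wt_le (fun i => v (Fin.natAdd n i))
    have hcases : (wt (fun i => v (Fin.castAdd n i)) = n - 1 ∧
        wt (fun i => v (Fin.natAdd n i)) = n) ∨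
        (wt (fun i => v (Fin.castAdd n i)) = n ∧
        wt (fun i => v (Fin.natAdd n i)) = n - 1) := by omega
    rcases hcases with ⟨h1, h2⟩ | ⟨h1, h2⟩
    · -- star is in the left half
      have hfull := all_isSome_of_wt _ h2
      set d : Fin n → Fin q := fun j => (v (Fin.natAdd n j)).get (hfull j) with hdn
      have hd : ∀ j, v (Fin.natAdd n j) = some (d j) := fun j => (Option.some_get _).symm
      obtain ⟨a, ⟨haS, hsub⟩, huniq⟩ := hScov (fun i => v (Fin.castAdd n i)) h1
      refine ⟨Fin.append a (fun i => some (d i)), ⟨Or.inl ⟨a, haS, d, rfl⟩, ?_⟩, ?_⟩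
      · intro i
        refine Fin.addCases (fun j hj => ?_) (fun j _ => ?_) i
        · rw [Fin.append_left]
          exact hsub j (by rwa [Fin.append_left] at hj)
        · rw [Fin.append_right]
          exact hd j
      · rintro s' ⟨(⟨a', ha'S, d', rfl⟩ | ⟨a', ha'S, d', rfl⟩), hsub'⟩
        · have hsubL : SubFace (fun i => v (Fin.castAdd n i)) a' := by
            intro j hj
            have := hsub' (Fin.castAdd n j) (by rwa [Fin.append_left])
            rwa [Fin.append_left] at this
          have ha' : a' = a := huniq a' ⟨ha'S, hsubL⟩
          have hd' : d' = d := by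
            funext j
            have h3 := hsub' (Fin.natAdd n j) (by rw [Fin.append_right]; rfl)
            rw [Fin.append_right] at h3
            exact (Option.some_inj.mp ((hd j).symm.trans h3)).symm
          rw [ha', hd']
        · exfalso
          have hallL : ∀ j, (v (Fin.castAdd n j)).isSome := by
            intro j
            have h3 := hsub' (Fin.castAdd n j) (by rw [Fin.append_left]; rfl)
            rw [Fin.append_left] at h3
            rw [h3]; rfl
          have := wt_of_all_isSome _ hallL
          omega
    · -- star is in the right half
      have hfull := all_isSome_of_wt _ h1
      set d : Fin n → Fin q := fun j => (v (Fin.castAdd n j)).get (hfull j) with hdn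
      have hd : ∀ j, v (Fin.castAdd n j) = some (d j) := fun j => (Option.some_get _).symm
      obtain ⟨a, ⟨haS, hsub⟩, huniq⟩ := hScov (fun i => v (Fin.natAdd n i)) h2
      refine ⟨Fin.append (fun i => some (d i)) a, ⟨Or.inr ⟨a, haS, d, rfl⟩, ?_⟩, ?_⟩
      · intro i
        refine Fin.addCases (fun j _ => ?_) (fun j hj => ?_) i
        · rw [Fin.append_left]
          exact hd j
        · rw [Fin.append_right]
          exact hsub j (by rwa [Fin.append_right] at hj)
      · rintro s' ⟨(⟨a', ha'S, d', rfl⟩ | ⟨a', ha'S, d', rfl⟩), hsub'⟩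
        · exfalso
          have hallR : ∀ j, (v (Fin.natAdd n j)).isSome := by
            intro j
            have h3 := hsub' (Fin.natAdd n j) (by rw [Fin.append_right]; rfl)
            rw [Fin.append_right] at h3
            rw [h3]; rfl
          have := wt_of_all_isSome _ hallR
          omega
        · have hsubR : SubFace (fun i => v (Fin.natAdd n i)) a' := by
            intro j hj
            have := hsub' (Fin.natAdd n j) (by rwa [Fin.append_right])
            rwa [Fin.append_right] at this
          have ha' : a' = a := huniq a' ⟨ha'S, hsubR⟩
          have hd' : d' = d := by
            funext j
            have h3 := hsub' (Fin.castAdd n j) (by rw [Fin.append_left]; rfl)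
            rw [Fin.append_left] at h3
            exact (Option.some_inj.mp ((hd j).symm.trans h3)).symm
          rw [ha', hd']
end

section
/- If an H(n,q,w,t) design exists with t ≥ 1, then an H(n−1,q,w−1,t−1) design exists (the derived design obtained by restricting to the codewords having a fixed value a in a fixed coordinate and deleting that coordinate). -/
lemma wt_snoc {m : ℕ} {α : Type*} (f : Fin m → Option α) (a : α) :
    wt (Fin.snoc f (some a)) = wt f + 1 := by
  classical
  simp only [wt, Finset.card_filter]
  rw [Fin.sum_univ_castSucc]
  simp [Fin.snoc]

lemma subface_snoc {m : ℕ} {α : Type*} {s u : Fin m → Option α} {a : α}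
    (h : SubFace s u) : SubFace (Fin.snoc s (some a)) (Fin.snoc u (some a)) := by
  intro i
  refine Fin.lastCases ?_ ?_ i
  · intro _; simp [Fin.snoc]
  · intro j hj
    simp only [Fin.snoc_castSucc] at hj ⊢
    exact h j hj

theorem derived_H_design (n q w t : ℕ) (hwn : w ≤ n) (htw : t ≤ w) (ht : 1 ≤ t) (hq : 1 ≤ q)
    (S : Set (Fin n → Option (Fin q))) (hS : IsH n w t (Fin q) S) :
    ∃ S' : Set (Fin (n - 1) → Option (Fin q)), IsH (n - 1) (w - 1) (t - 1) (Fin q) S' := by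
  classical
  have hn : 1 ≤ n := le_trans (le_trans ht htw) hwn
  obtain ⟨m, rfl⟩ : ∃ m, n = m + 1 := ⟨n - 1, (Nat.succ_pred_eq_of_pos hn).symm⟩
  have hm : m + 1 - 1 = m := rfl
  obtain ⟨hwt, huniq⟩ := hS
  set a : Fin q := ⟨0, hq⟩
  refine ⟨{s' | Fin.snoc s' (some a) ∈ S}, ?_, ?_⟩
  · intro s' hs'
    have := hwt _ hs'
    rw [wt_snoc] at this
    omega
  · intro u' hu'
    have hwtu : wt (Fin.snoc u' (some a)) = t := by
      rw [wt_snoc, hu']; omega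
    obtain ⟨s, ⟨hsS, hsf⟩, hsu⟩ := huniq _ hwtu
    have hlast : s (Fin.last m) = some a := by
      have := hsf (Fin.last m) (by simp [Fin.snoc])
      simpa [Fin.snoc] using this
    have hsrep : s = Fin.snoc (fun i => s i.castSucc) (some a) := by
      funext i
      refine Fin.lastCases ?_ ?_ i
      · simpa [Fin.snoc] using hlast
      · intro j; simp [Fin.snoc]
    refine ⟨fun i => s i.castSucc, ⟨?_, ?_⟩, ?_⟩
    · show Fin.snoc _ (some a) ∈ S
      exact hsrep ▸ hsS
    · intro i hi
      have := hsf i.castSucc (by simpa [Fin.snoc] using hi)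
      simpa [Fin.snoc] using this
    · intro s'' ⟨hs''S, hs''f⟩
      have hkey : Fin.snoc s'' (some a) = s :=
        hsu _ ⟨hs''S, subface_snoc hs''f⟩
      funext i
      have := congrFun hkey i.castSucc
      simpa [Fin.snoc] using this
end

section
/- The minimum Hamming distance between two distinct codewords of an H(n,q,w,t) design with more than one codeword is at most 1 + 2(w−t), i.e., there exist two distinct codewords at Hamming distance ≤ 1 + 2(w−t), provided q ≥ 2 and n > w. -/
theorem H_design_dist_upper (n q w t : ℕ) (hwn : w < n) (htw : t ≤ w) (ht : 1 ≤ t) (hq : 2 ≤ q)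
    (S : Set (Fin n → Option (Fin q))) (hS : IsH n w t (Fin q) S) (hS2 : S.Nontrivial) :
    ∃ u ∈ S, ∃ v ∈ S, u ≠ v ∧ hammingDist u v ≤ 1 + 2 * (w - t) := by
  classical
  obtain ⟨hw, hcov⟩ := hS
  obtain ⟨s, hsS, _, _, _⟩ := hS2
  set A : Finset (Fin n) := Finset.univ.filter (fun k => ((s k).isSome : Prop)) with hA
  have hAcard : A.card = w := hw s hsS
  obtain ⟨T, hTA, hTcard⟩ := Finset.exists_subset_card_eq (s := A) (n := t) (by omega)
  have hTsome : ∀ k ∈ T, (s k).isSome := by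
    intro k hk
    have := hTA hk
    simpa [hA] using this
  obtain ⟨i, hiT⟩ : T.Nonempty := Finset.card_pos.mp (by omega)
  obtain ⟨b, hb⟩ := Option.isSome_iff_exists.mp (hTsome i hiT)
  obtain ⟨a, hab⟩ := Fintype.exists_ne_of_one_lt_card (by simp; omega) b
  set u : Fin n → Option (Fin q) := fun k => if k ∈ T then s k else none with hu
  set u' := Function.update u i (some a) with hu'
  have hu'some : ∀ k, (u' k).isSome ↔ k ∈ T := by
    intro k
    rcases eq_or_ne k i with rfl | hk
    · simp [hu', hiT]
    · simp only [hu', Function.update_of_ne hk, hu]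
      by_cases hkT : k ∈ T
      · simpa [hkT] using hTsome k hkT
      · simp [hkT]
  have hwtu' : wt u' = t := by
    rw [← hTcard]
    unfold wt
    congr 1
    ext k
    simp [hu'some k]
  obtain ⟨s', ⟨hs'S, hsub⟩, -⟩ := hcov u' hwtu'
  have hs'i : s' i = some a := by
    have : (u' i).isSome := by simp [hu']
    have := hsub i this
    simpa [hu'] using this
  have hagree : ∀ k ∈ T, k ≠ i → s' k = s k := by
    intro k hk hki
    have h1 : (u' k).isSome := (hu'some k).mpr hk
    have := hsub k h1
    rw [this]
    simp [hu', Function.update_of_ne hki, hu, hk]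
  have hs'T : ∀ k ∈ T, (s' k).isSome := by
    intro k hk
    rcases eq_or_ne k i with rfl | hki
    · simp [hs'i]
    · rw [hagree k hk hki]; exact hTsome k hk
  have hne : s ≠ s' := by
    intro h
    apply hab
    have := hs'i
    rw [← h, hb] at this
    exact (Option.some_injective _ this.symm)
  refine ⟨s, hsS, s', hs'S, hne, ?_⟩
  -- distance bound
  set A' : Finset (Fin n) := Finset.univ.filter (fun k => ((s' k).isSome : Prop)) with hA'
  have hA'card : A'.card = w := hw s' hs'S
  have hTsub : T ⊆ A ∩ A' := by
    intro k hk
    simp only [Finset.mem_inter, hA, hA', Finset.mem_filter, Finset.mem_univ, true_and]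
    exact ⟨hTsome k hk, hs'T k hk⟩
  have hEsub : T.erase i ⊆ A ∪ A' := by
    intro k hk
    exact Finset.mem_union_left _ (hTA (Finset.mem_of_mem_erase hk))
  have hDsub : (Finset.univ.filter fun k => s k ≠ s' k) ⊆ (A ∪ A') \ T.erase i := by
    intro k hk
    simp only [Finset.mem_filter, Finset.mem_univ, true_and] at hk
    rw [Finset.mem_sdiff]
    constructor
    · by_contra h
      simp only [Finset.mem_union, hA, hA', Finset.mem_filter, Finset.mem_univ, true_and,
        not_or, Bool.not_eq_true] at h
      have h1 : s k = none := by
        cases hsk : s k <;> simp_all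
      have h2 : s' k = none := by
        cases hsk : s' k <;> simp_all
      exact hk (by rw [h1, h2])
    · intro hkE
      obtain ⟨hki, hkT⟩ := Finset.mem_erase.mp hkE
      exact hk (hagree k hkT hki).symm
  have hdist : hammingDist s s' = (Finset.univ.filter fun k => s k ≠ s' k).card := rfl
  have h1 : (Finset.univ.filter fun k => s k ≠ s' k).card ≤ ((A ∪ A') \ T.erase i).card :=
    Finset.card_le_card hDsub
  have h2 : ((A ∪ A') \ T.erase i).card = (A ∪ A').card - (T.erase i).card :=
    Finset.card_sdiff_of_subset hEsub
  have h3 : (A ∪ A').card + (A ∩ A').card = A.card + A'.card :=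
    Finset.card_union_add_card_inter A A'
  have h4 : T.card ≤ (A ∩ A').card := Finset.card_le_card hTsub
  have h5 : (T.erase i).card = T.card - 1 := Finset.card_erase_of_mem hiT
  have h6 : (T.erase i).card ≤ (A ∪ A').card := Finset.card_le_card hEsub
  rw [hdist]
  omega
end

section
/- The number of H(m,3,m,m−1) designs, i.e., the number of MDS codes with distance 2 in (Fin 3)^m, equals 3 · 2^{m−1}. -/
namespace CountMDS


abbrev R := ZMod 3

def LineP {n : ℕ} (C : Set (Fin n → R)) : Prop :=
  ∀ (j : Fin n) (y : Fin n → R), ∃! a : R, Function.update y j a ∈ C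

def Hyp {n : ℕ} (ε : Fin n → R) (c : R) : Set (Fin n → R) :=
  {x | ∑ i, ε i * x i = c}

def IsU {n : ℕ} (ε : Fin n → R) : Prop := ∀ i, ε i = 1 ∨ ε i = 2

lemma usq {a : R} (h : a = 1 ∨ a = 2) : a * a = 1 := by rcases h with rfl | rfl <;> decide

lemma sum_mul_update {n} (ε y : Fin n → R) (j : Fin n) (a : R) :
    ∑ i, ε i * Function.update y j a i = ∑ i, ε i * y i + ε j * (a - y j) := by
  have h1 : (fun i => ε i * Function.update y j a i)
      = Function.update (fun i => ε i * y i) j (ε j * a) := by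
    funext i; rcases eq_or_ne i j with rfl | h
    · simp
    · simp [Function.update_of_ne h]
  rw [h1, Finset.sum_update_of_mem (Finset.mem_univ j),
    Finset.sdiff_singleton_eq_erase, ← Finset.add_sum_erase _ _ (Finset.mem_univ j)]
  ring

lemma sum_mul_zero {n} (ε : Fin n → R) : ∑ i, ε i * (fun _ => (0:R)) i = 0 := by simp

lemma lineP_hyp {n} {ε : Fin n → R} (hU : IsU ε) (c : R) : LineP (Hyp ε c) := by
  intro j y
  have h2 := usq (hU j)
  refine ⟨ε j * (c - ∑ i, ε i * y i) + y j, ?_, ?_⟩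
  · show _ ∈ Hyp ε c
    rw [Hyp, Set.mem_setOf_eq, sum_mul_update]
    linear_combination (c - ∑ i, ε i * y i) * h2
  · intro a ha
    rw [Hyp, Set.mem_setOf_eq, sum_mul_update] at ha
    linear_combination ε j * ha - (a - y j) * h2

lemma hyp_two {n} (ε : Fin n → R) (c : R) : Hyp (fun i => 2 * ε i) (2 * c) = Hyp ε c := by
  ext x
  simp only [Hyp, Set.mem_setOf_eq, mul_assoc, ← Finset.mul_sum]
  constructor
  · exact fun h => mul_left_cancel₀ (by decide : (2:R) ≠ 0) h
  · intro h; rw [h]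

lemma parallel {n} {ε ε' : Fin (n+1) → R} {c c' : R}
    (hU : IsU ε) (hU' : IsU ε') (h0 : ε 0 = 1) (h0' : ε' 0 = 1)
    (hd : ∀ y, y ∈ Hyp ε c → y ∉ Hyp ε' c') : ε' = ε ∧ c ≠ c' := by
  have hsq : ∀ j, ε j * ε j = 1 := fun j => usq (hU j)
  have hεε : ε' = ε := by
    by_contra hne
    obtain ⟨j, hj⟩ : ∃ j, ε' j ≠ ε j := by
      by_contra hall; push_neg at hall; exact hne (funext hall)
    have hj0 : j ≠ 0 := fun hj0 => hj (by rw [hj0, h0, h0'])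
    have hj2 : ε' j = 2 * ε j := by
      rcases hU j with h | h <;> rcases hU' j with h' | h' <;> rw [h, h'] at hj ⊢ <;>
        first | decide | exact absurd rfl hj
    set a : R := ε j * (c' - c) with ha
    set b : R := 2 * c - c' with hb
    set y : Fin (n+1) → R := Function.update (Function.update (fun _ => (0:R)) 0 b) j a with hy
    have hyc : y ∈ Hyp ε c := by
      show ∑ i, ε i * y i = c
      rw [hy, sum_mul_update, sum_mul_update, sum_mul_zero,
        Function.update_of_ne hj0]
      simp only [h0]
      linear_combination (c' - c) * hsq j
    have hyc' : y ∈ Hyp ε' c' := by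
      show ∑ i, ε' i * y i = c'
      rw [hy, sum_mul_update, sum_mul_update, sum_mul_zero,
        Function.update_of_ne hj0, hj2, h0']
      linear_combination (2 * (c' - c)) * hsq j
    exact hd y hyc hyc'
  refine ⟨hεε, fun hcc => ?_⟩
  have h3 : Function.update (fun _ => (0:R)) 0 c ∈ Hyp ε c := by
    show ∑ i, ε i * _ = c
    rw [sum_mul_update, sum_mul_zero, h0]; ring
  exact hd _ h3 (by rw [hεε, ← hcc]; exact h3)

lemma affine_of_inj : ∀ f : R → R, Function.Injective f →
    ∃ δ d : R, (δ = 1 ∨ δ = 2) ∧ ∀ t, f t = δ * t + d := by decide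

theorem exists_hyp : ∀ {n : ℕ} (C : Set (Fin n → R)), LineP C →
    ∃ ε c, IsU ε ∧ C = Hyp ε c := by
  intro n
  induction n with
  | zero =>
    intro C _
    by_cases h0 : (fun i => i.elim0 : Fin 0 → R) ∈ C
    · refine ⟨Fin.elim0, 0, fun i => i.elim0, ?_⟩
      ext x
      have hx : x = fun i => i.elim0 := funext fun i => i.elim0
      subst hx
      simp [Hyp, h0]
    · refine ⟨Fin.elim0, 1, fun i => i.elim0, ?_⟩
      ext x
      have hx : x = fun i => i.elim0 := funext fun i => i.elim0
      subst hx
      simp [Hyp, h0]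
  | succ m ih =>
    cases m with
    | zero =>
      intro C h
      obtain ⟨a₀, ha₀, hun⟩ := h 0 (fun _ => 0)
      refine ⟨fun _ => 1, a₀, fun _ => Or.inl rfl, ?_⟩
      ext x
      have hx : x = Function.update (fun _ => (0:R)) 0 (x 0) := by
        funext i
        have hi : i = 0 := Fin.fin_one_eq_zero i
        subst hi; simp
      constructor
      · intro hxC
        have := hun (x 0) (show Function.update (fun _ => (0:R)) 0 (x 0) ∈ C by rw [← hx]; exact hxC)
        show ∑ i, _ = _
        rw [Fin.sum_univ_one, this, one_mul]
      · intro hxH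
        have hx0 : x 0 = a₀ := by
          have : ∑ i, (1:R) * x i = a₀ := hxH
          rwa [Fin.sum_univ_one, one_mul] at this
        rw [hx, hx0]; exact ha₀
    | succ k =>
      intro C h
      have slice : ∀ t : R, ∃ ε c, IsU ε ∧ ε 0 = 1 ∧
          {y : Fin (k+1) → R | Fin.snoc y t ∈ C} = Hyp ε c := by
        intro t
        have hL : LineP {y : Fin (k+1) → R | Fin.snoc y t ∈ C} := by
          intro j y
          have key : ∀ a : R, Function.update (Fin.snoc y t : Fin (k+2) → R) j.castSucc a
              = Fin.snoc (Function.update y j a) t :=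
            fun a => (Fin.snoc_update (α := fun _ => R) ..).symm
          obtain ⟨a, ha, hun⟩ := h j.castSucc (Fin.snoc y t)
          refine ⟨a, ?_, fun b hb => ?_⟩
          · show Fin.snoc (Function.update y j a) t ∈ C
            rw [← key]; exact ha
          · have hb' : Fin.snoc (Function.update y j b) t ∈ C := hb
            exact hun b (show Function.update (Fin.snoc y t) j.castSucc b ∈ C by rw [key]; exact hb')
        obtain ⟨ε, c, hεU, hC⟩ := ih _ hL
        rcases hεU 0 with h1 | h2
        · exact ⟨ε, c, hεU, h1, hC⟩
        · refine ⟨fun i => 2 * ε i, 2 * c, ?_, ?_, by rw [hC, hyp_two]⟩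
          · intro i
            show 2 * ε i = 1 ∨ 2 * ε i = 2
            rcases hεU i with hh | hh <;> rw [hh]
            · right; decide
            · left; decide
          · show 2 * ε 0 = 1
            rw [h2]; decide
      choose η cc hU h1 hC using slice
      have memC : ∀ (y : Fin (k+1) → R) (t : R), (Fin.snoc y t ∈ C) ↔ y ∈ Hyp (η t) (cc t) :=
        fun y t => (Set.ext_iff.mp (hC t) y)
      have hlast : ∀ y : Fin (k+1) → R, ∃! t : R, y ∈ Hyp (η t) (cc t) := by
        intro y
        have key : ∀ a : R, Function.update (Fin.snoc y (0:R) : Fin (k+2) → R) (Fin.last (k+1)) a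
            = Fin.snoc y a := fun a => Fin.update_snoc_last (α := fun _ => R) ..
        obtain ⟨t, ht, hun⟩ := h (Fin.last (k+1)) (Fin.snoc y 0)
        refine ⟨t, ?_, ?_⟩
        · show y ∈ Hyp (η t) (cc t)
          rw [← memC]; rw [← key t]; exact ht
        · intro t' ht'
          exact hun t' (show Function.update (Fin.snoc y 0) (Fin.last (k+1)) t' ∈ C by
            rw [key t', memC]; exact ht')
      have hdisj : ∀ t t' : R, t ≠ t' → ∀ y, y ∈ Hyp (η t) (cc t) → y ∉ Hyp (η t') (cc t') := by
        intro t t' hne y hy hy'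
        obtain ⟨s, _, hun⟩ := hlast y
        exact hne ((hun t hy).trans (hun t' hy').symm)
      have hpar : ∀ t t' : R, t ≠ t' → η t' = η t ∧ cc t ≠ cc t' :=
        fun t t' hne => parallel (hU t) (hU t') (h1 t) (h1 t') (hdisj t t' hne)
      have hη : ∀ t, η t = η 0 := by
        intro t
        rcases eq_or_ne t 0 with rfl | hne
        · rfl
        · exact (hpar 0 t (Ne.symm hne)).1
      have hcinj : Function.Injective cc := by
        intro t t' hcc
        by_contra hne
        exact (hpar t t' hne).2 hcc
      obtain ⟨δ, d, hδ, hcd⟩ := affine_of_inj cc hcinj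
      refine ⟨Fin.snoc (η 0) (-δ), d, ?_, ?_⟩
      · intro i
        induction i using Fin.lastCases with
        | last =>
          rw [Fin.snoc_last]
          rcases hδ with rfl | rfl
          · right; decide
          · left; decide
        | cast j => rw [Fin.snoc_castSucc]; exact hU 0 j
      · ext x
        have hx1 : x ∈ C ↔ Fin.init x ∈ Hyp (η 0) (cc (x (Fin.last (k+1)))) := by
          rw [← hη (x (Fin.last (k+1))), ← memC, Fin.snoc_init_self]
        have hx2 : x ∈ Hyp (Fin.snoc (η 0) (-δ)) d ↔
            ∑ i : Fin (k+1), η 0 i * Fin.init x i + (-δ) * x (Fin.last (k+1)) = d := by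
          simp only [Hyp, Set.mem_setOf_eq, Fin.sum_univ_castSucc, Fin.snoc_castSucc,
            Fin.snoc_last, Fin.init]
        rw [hx1, hx2]
        show (∑ i, η 0 i * Fin.init x i = cc (x (Fin.last (k+1)))) ↔ _
        rw [hcd]
        constructor <;> intro hh <;> linear_combination hh



def emb {n : ℕ} (x : Fin n → R) : Fin n → Option (Fin 3) := fun i => some (x i)

lemma emb_inj {n : ℕ} : Function.Injective (emb (n := n)) :=
  fun _ _ h => funext fun i => Option.some_injective _ (congrFun h i)

lemma wt_emb {n : ℕ} (x : Fin n → R) : wt (emb x) = n := by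
  simp [wt, emb]
  exact (congrArg Finset.card (Finset.filter_true_of_mem fun i _ => rfl)).trans (Finset.card_fin n)

lemma isH_iff {n : ℕ} (hn : 1 ≤ n) (S : Set (Fin n → Option (Fin 3))) :
    IsH n n (n-1) (Fin 3) S ↔ ∃ C : Set (Fin n → R), LineP C ∧ S = emb '' C := by
  constructor
  · rintro ⟨hw, hu⟩
    have hfull : ∀ s ∈ S, ∃ x : Fin n → R, emb x = s := by
      intro s hs
      have hcard : (Finset.univ.filter fun i => ((s i).isSome : Prop)).card = Fintype.card (Fin n) := by
        show wt s = _
        rw [hw s hs, Fintype.card_fin]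
      have huniv := Finset.eq_univ_of_card _ hcard
      have hsome : ∀ i, (s i).isSome := by
        intro i
        have : i ∈ Finset.univ.filter fun i => ((s i).isSome : Prop) := by
          rw [huniv]; exact Finset.mem_univ i
        simpa using this
      exact ⟨fun i => (s i).get (hsome i), funext fun i => Option.some_get (hsome i)⟩
    refine ⟨{x | emb x ∈ S}, ?_, ?_⟩
    · intro j y
      set u : Fin n → Option (Fin 3) := fun i => if i = j then none else some (y i) with hu'
      have hwtu : wt u = n - 1 := by
        have : (Finset.univ.filter fun i => ((u i).isSome : Prop)) = Finset.univ.erase j := by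
          ext i
          by_cases hij : i = j
          · subst hij; simp [hu']
          · simp [hu', hij]; rfl
        rw [wt, this, Finset.card_erase_of_mem (Finset.mem_univ j), Finset.card_univ,
          Fintype.card_fin]
      obtain ⟨s, ⟨hsS, hsub⟩, huniq⟩ := hu u hwtu
      obtain ⟨x, rfl⟩ := hfull s hsS
      have hclaim : emb (Function.update y j (x j)) = emb x := by
        funext i
        rcases eq_or_ne i j with rfl | hij
        · simp [emb]
        · have h1 : (u i).isSome := by simp [hu', hij]; rfl
          have h2 := hsub i h1
          have h3 : u i = some (y i) := by simp [hu', hij]; rfl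
          rw [h3] at h2
          simp only [emb] at h2 ⊢
          rw [Function.update_of_ne hij, h2]
          rfl
      refine ⟨x j, ?_, ?_⟩
      · show emb (Function.update y j (x j)) ∈ S
        rw [hclaim]; exact hsS
      · intro a ha
        have haS : emb (Function.update y j a) ∈ S := ha
        have hsubf : SubFace (emb (Function.update y j a)) u := by
          intro i hi
          have hij : i ≠ j := by
            intro hij; rw [hij] at hi; simp [hu'] at hi
          have h3 : u i = some (y i) := by simp [hu', hij]; rfl
          rw [h3]
          simp only [emb]
          rw [Function.update_of_ne hij]
          rfl
        have := huniq _ ⟨haS, hsubf⟩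
        have h4 := emb_inj (this.trans hclaim.symm)
        have := congrFun h4 j
        simpa using this
    · ext s
      constructor
      · intro hs
        obtain ⟨x, rfl⟩ := hfull s hs
        exact ⟨x, hs, rfl⟩
      · rintro ⟨x, hx, rfl⟩
        exact hx
  · rintro ⟨C, hL, rfl⟩
    constructor
    · rintro s ⟨x, _, rfl⟩
      exact wt_emb x
    · intro u hwt
      set T := Finset.univ.filter fun i => ((u i).isSome : Prop) with hT
      have hTc : Tᶜ.card = 1 := by
        rw [Finset.card_compl, Fintype.card_fin]
        rw [wt] at hwt
        rw [← hT] at hwt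
        omega
      obtain ⟨j, hj⟩ := Finset.card_eq_one.mp hTc
      have hjnone : u j = none := by
        have : j ∈ Tᶜ := hj ▸ Finset.mem_singleton_self j
        rw [Finset.mem_compl, hT, Finset.mem_filter] at this
        push_neg at this
        exact Option.not_isSome_iff_eq_none.mp (fun hh => this (Finset.mem_univ j) hh)
      have hsome : ∀ i, i ≠ j → ∃ v : Fin 3, u i = some v := by
        intro i hij
        have : i ∉ Tᶜ := by rw [hj]; simp [hij]
        rw [Finset.mem_compl] at this
        push_neg at this
        rw [hT, Finset.mem_filter] at this
        exact Option.isSome_iff_exists.mp this.2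
      set y : Fin n → R := fun i => (u i).getD 0 with hy
      have husome : ∀ i, i ≠ j → u i = some (y i) := by
        intro i hij
        obtain ⟨v, hv⟩ := hsome i hij
        have hyi : y i = v := by
          show (u i).getD 0 = v
          rw [hv]; rfl
        rw [hv, hyi]
        rfl
      obtain ⟨a₀, ha₀, hun⟩ := hL j y
      refine ⟨emb (Function.update y j a₀), ⟨⟨_, ha₀, rfl⟩, ?_⟩, ?_⟩
      · intro i hi
        have hij : i ≠ j := by
          intro hh; rw [hh, hjnone] at hi; simp at hi
        rw [husome i hij]
        simp only [emb]
        rw [Function.update_of_ne hij]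
        rfl
      · rintro s' ⟨⟨x', hx', rfl⟩, hsub'⟩
        have hagree : ∀ i, i ≠ j → x' i = y i := by
          intro i hij
          have h1 : (u i).isSome := by rw [husome i hij]; rfl
          have h2 := hsub' i h1
          rw [husome i hij] at h2
          exact Option.some_injective _ h2
        have hx'' : x' = Function.update y j (x' j) := by
          funext i
          rcases eq_or_ne i j with rfl | hij
          · simp
          · rw [Function.update_of_ne hij]; exact hagree i hij
        have : x' j = a₀ := hun (x' j) (show Function.update y j (x' j) ∈ C by rw [← hx'']; exact hx')
        rw [hx'', this]


lemma hyp_nonneg_mem {n} {ε : Fin (n+1) → R} (h0 : ε 0 = 1) (c : R) :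
    Function.update (fun _ => (0:R)) 0 c ∈ Hyp ε c := by
  show ∑ i, ε i * _ = c
  rw [sum_mul_update, sum_mul_zero, h0]; ring

lemma hyp_inj {n} {ε ε' : Fin (n+1) → R} {c c' : R} (hU : IsU ε)
    (h0 : ε 0 = 1) (h0' : ε' 0 = 1) (h : Hyp ε c = Hyp ε' c') : ε = ε' ∧ c = c' := by
  have hmem : ∀ x : Fin (n+1) → R, (∑ i, ε i * x i = c) ↔ (∑ i, ε' i * x i = c') := fun x => Set.ext_iff.mp h x
  have hc : c = c' := by
    have h1 := (hmem (Function.update (fun _ => (0:R)) 0 c)).mp (hyp_nonneg_mem h0 c)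
    rw [sum_mul_update, sum_mul_zero, h0'] at h1
    linear_combination h1
  refine ⟨funext fun j => ?_, hc⟩
  rcases eq_or_ne j 0 with rfl | hj0
  · rw [h0, h0']
  · set x : Fin (n+1) → R :=
      Function.update (Function.update (fun _ => (0:R)) 0 (c - ε j)) j 1 with hx
    have hxc : ∑ i, ε i * x i = c := by
      rw [hx, sum_mul_update, sum_mul_update, sum_mul_zero, Function.update_of_ne hj0, h0]
      ring
    have h2 := (hmem x).mp hxc
    rw [hx, sum_mul_update, sum_mul_update, sum_mul_zero, Function.update_of_ne hj0, h0',
      ← hc] at h2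
    linear_combination - h2

lemma exists_hyp_norm {n : ℕ} (C : Set (Fin (n+1) → R)) (h : LineP C) :
    ∃ ε c, IsU ε ∧ ε 0 = 1 ∧ C = Hyp ε c := by
  obtain ⟨ε, c, hU, hC⟩ := exists_hyp C h
  rcases hU 0 with h1 | h2
  · exact ⟨ε, c, hU, h1, hC⟩
  · refine ⟨fun i => 2 * ε i, 2 * c, ?_, ?_, by rw [hC, hyp_two]⟩
    · intro i
      show 2 * ε i = 1 ∨ 2 * ε i = 2
      rcases hU i with hh | hh <;> rw [hh]
      · right; decide
      · left; decide
    · show 2 * ε 0 = 1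
      rw [h2]; decide

def epsOf {k : ℕ} (b : Fin k → Bool) : Fin (k+1) → R :=
  Fin.cons 1 (fun i => if b i then 2 else 1)

lemma epsOf_isU {k : ℕ} (b : Fin k → Bool) : IsU (epsOf b) := by
  intro i
  induction i using Fin.cases with
  | zero => left; rw [epsOf, Fin.cons_zero]
  | succ j =>
    rw [epsOf, Fin.cons_succ]
    by_cases hb : b j <;> simp [hb]

lemma epsOf_zero {k : ℕ} (b : Fin k → Bool) : epsOf b 0 = 1 := Fin.cons_zero _ _

def Phi {k : ℕ} (p : (Fin k → Bool) × R) : Set (Fin (k+1) → Option (Fin 3)) :=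
  emb '' Hyp (epsOf p.1) p.2

lemma phi_inj {k : ℕ} : Function.Injective (Phi (k := k)) := by
  intro p p' h
  have hhyp : Hyp (epsOf p.1) p.2 = Hyp (epsOf p'.1) p'.2 :=
    Set.image_injective.mpr emb_inj h
  obtain ⟨hε, hc⟩ := hyp_inj (epsOf_isU p.1) (epsOf_zero p.1) (epsOf_zero p'.1) hhyp
  have hb : p.1 = p'.1 := by
    funext i
    have := congrFun hε i.succ
    rw [epsOf, epsOf, Fin.cons_succ, Fin.cons_succ] at this
    by_cases h1 : p.1 i <;> by_cases h2 : p'.1 i <;> simp [h1, h2] at this ⊢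
    · exact absurd this (by decide)
    · exact absurd this (by decide)
  exact Prod.ext hb hc

theorem count_main (k : ℕ) :
    {S : Set (Fin (k+1) → Option (Fin 3)) | IsH (k+1) (k+1) (k+1-1) (Fin 3) S}.ncard
      = 3 * 2 ^ k := by
  have hset : {S : Set (Fin (k+1) → Option (Fin 3)) | IsH (k+1) (k+1) (k+1-1) (Fin 3) S}
      = Set.range (Phi (k := k)) := by
    ext S
    simp only [Set.mem_setOf_eq, Set.mem_range]
    rw [isH_iff (Nat.le_add_left 1 k)]
    constructor
    · rintro ⟨C, hL, rfl⟩
      obtain ⟨ε, c, hU, h0, rfl⟩ := exists_hyp_norm C hL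
      refine ⟨(fun i => decide (ε i.succ = 2), c), ?_⟩
      have hε : epsOf (fun i => decide (ε i.succ = 2)) = ε := by
        funext j
        induction j using Fin.cases with
        | zero => rw [epsOf, Fin.cons_zero, h0]
        | succ i =>
          simp only [epsOf, Fin.cons_succ]
          rcases hU i.succ with hh | hh <;> simp [hh] <;> decide
      show emb '' Hyp (epsOf _) c = emb '' Hyp ε c
      rw [hε]
    · rintro ⟨p, rfl⟩
      exact ⟨Hyp (epsOf p.1) p.2, lineP_hyp (epsOf_isU p.1) p.2, rfl⟩
  rw [hset, ← Set.image_univ, Set.ncard_image_of_injective _ phi_inj, Set.ncard_univ,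
    Nat.card_eq_fintype_card, Fintype.card_prod, Fintype.card_fun, Fintype.card_fin,
    Fintype.card_bool, ZMod.card]
  ring

end CountMDS

theorem count_MDS_q3 (m : ℕ) (hm : 1 ≤ m) :
    {S : Set (Fin m → Option (Fin 3)) | IsH m m (m - 1) (Fin 3) S}.ncard = 3 * 2 ^ (m - 1) := by
  obtain ⟨k, rfl⟩ : ∃ k, m = k + 1 := ⟨m - 1, (Nat.succ_pred_eq_of_pos hm).symm⟩
  simpa using CountMDS.count_main k
end

section
/- If an H(n,q,n−1,n−2) design exists, then for every s ≥ 1 an H(n,s·q,n−1,n−2) design exists. -/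
namespace HScale

variable {n : ℕ} {α β : Type*}

def mapWord (f : α → β) (x : Fin n → Option α) : Fin n → Option β :=
  fun i => (x i).map f

lemma wt_mapWord (f : α → β) (x : Fin n → Option α) : wt (mapWord f x) = wt x := by
  simp [wt, mapWord]

lemma subFace_mapWord (f : α → β) {v u : Fin n → Option α} (h : SubFace v u) :
    SubFace (mapWord f v) (mapWord f u) := by
  intro i hi
  have hu : ((u i).isSome : Prop) := by simpa [mapWord] using hi
  simp [mapWord, h i hu]

lemma mapWord_symm (e : α ≃ β) (x : Fin n → Option β) :
    mapWord e (mapWord e.symm x) = x := by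
  funext i; simp [mapWord, Option.map_map, Function.comp]

lemma mapWord_symm' (e : α ≃ β) (x : Fin n → Option α) :
    mapWord e.symm (mapWord e x) = x := by
  funext i; simp [mapWord, Option.map_map, Function.comp]

lemma isH_map (e : α ≃ β) {w t : ℕ} {S : Set (Fin n → Option α)} (h : IsH n w t α S) :
    IsH n w t β (mapWord (n := n) e '' S) := by
  obtain ⟨h1, h2⟩ := h
  constructor
  · rintro _ ⟨x, hx, rfl⟩; rw [wt_mapWord]; exact h1 x hx
  · intro u hu
    obtain ⟨x, ⟨hxS, hxu⟩, hux⟩ := h2 (mapWord e.symm u) (by rw [wt_mapWord]; exact hu)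
    refine ⟨mapWord e x, ⟨⟨x, hxS, rfl⟩, ?_⟩, ?_⟩
    · have := subFace_mapWord (e : α → β) hxu
      rwa [mapWord_symm] at this
    · rintro _ ⟨⟨y, hyS, rfl⟩, hsub⟩
      have hy : y = x := by
        refine hux y ⟨hyS, ?_⟩
        have := subFace_mapWord (e.symm : β → α) hsub
        rwa [mapWord_symm'] at this
      rw [hy]

variable [AddCommGroup β]

def pq (x : Fin n → Option (β × α)) : Fin n → Option α := mapWord Prod.snd x

def psum (x : Fin n → Option (β × α)) : β := ∑ i, ((x i).map Prod.fst).getD 0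

def Sprod (S : Set (Fin n → Option α)) : Set (Fin n → Option (β × α)) :=
  {x | pq x ∈ S ∧ psum x = 0}

lemma card_none {u : Fin n → Option α} :
    wt u + (Finset.univ.filter fun i => ¬ ((u i).isSome : Prop)).card = n := by
  simpa [wt] using Finset.card_filter_add_card_filter_not
    (s := (Finset.univ : Finset (Fin n))) (p := fun i => ((u i).isSome : Prop))

lemma isH_prod (hn : 3 ≤ n) {S : Set (Fin n → Option α)}
    (hS : IsH n (n - 1) (n - 2) α S) :
    IsH n (n - 1) (n - 2) (β × α) (Sprod S) := by
  obtain ⟨h1, h2⟩ := hS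
  constructor
  · rintro x ⟨hx1, _⟩
    have := h1 _ hx1
    rwa [pq, wt_mapWord] at this
  · intro u hu
    -- the set of star positions of u has two elements
    set A : Finset (Fin n) := Finset.univ.filter fun i0 => ¬ ((u i0).isSome : Prop) with hA
    have hAcard : A.card = 2 := by
      have h := card_none (u := u)
      rw [← hA] at h
      omega
    -- the unique element of S above pq u
    obtain ⟨t, ⟨htS, htu⟩, htuniq⟩ := h2 (pq u) (by rw [pq, wt_mapWord]; exact hu)
    set At : Finset (Fin n) := Finset.univ.filter fun i0 => ¬ ((t i0).isSome : Prop) with hAt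
    have hAtcard : At.card = 1 := by
      have h := card_none (u := t)
      rw [← hAt] at h
      have := h1 t htS
      omega
    have hsub : At ⊆ A := by
      intro k hk
      simp only [hAt, Finset.mem_filter, Finset.mem_univ, true_and] at hk
      simp only [hA, Finset.mem_filter, Finset.mem_univ, true_and]
      intro hks
      have : ((pq u k).isSome : Prop) := by simpa [pq, mapWord] using hks
      have := htu k this
      apply hk
      rw [this]
      simpa [pq, mapWord] using hks
    obtain ⟨i0, hAti⟩ := Finset.card_eq_one.mp hAtcard
    obtain ⟨a', b', hab, hAab⟩ := Finset.card_eq_two.mp hAcard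
    have hiA : i0 ∈ A := hsub (by simp [hAti])
    -- j0 : the other star position of u
    have hiA' : i0 = a' ∨ i0 = b' := by
      rw [hAab] at hiA
      simpa using hiA
    obtain ⟨j0, hij, hAij⟩ : ∃ j0, i0 ≠ j0 ∧ A = {i0, j0} := by
      rcases hiA' with h | h
      · exact ⟨b', by rw [h]; exact hab, by rw [h]; exact hAab⟩
      · exact ⟨a', by rw [h]; exact hab.symm, by rw [hAab, h]; exact Finset.pair_comm _ _⟩
    have hmemA : ∀ k, k ∈ A ↔ u k = none := by
      intro k
      simp [hA, Option.not_isSome_iff_eq_none]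
    have hmemAt : ∀ k, k ∈ At ↔ t k = none := by
      intro k
      simp [hAt, Option.not_isSome_iff_eq_none]
    have hui : u i0 = none := (hmemA i0).mp (by rw [hAij]; simp)
    have huj : u j0 = none := (hmemA j0).mp (by rw [hAij]; simp)
    have hti : t i0 = none := (hmemAt i0).mp (by simp [hAti])
    have htj : (t j0).isSome := by
      by_contra h
      have : j0 ∈ At := by simp [hAt, Option.not_isSome_iff_eq_none.mp h]
      rw [hAti, Finset.mem_singleton] at this
      exact hij this.symm
    have huk : ∀ k, k ≠ i0 → k ≠ j0 → (u k).isSome := by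
      intro k hki hkj
      by_contra h
      have : k ∈ A := by simp [hA, Option.not_isSome_iff_eq_none.mp h]
      rw [hAij] at this
      simp only [Finset.mem_insert, Finset.mem_singleton] at this
      tauto
    set b : α := (t j0).get htj with hb
    set x : Fin n → Option (β × α) := Function.update u j0 (some (-psum u, b)) with hx
    have hxk : ∀ k, k ≠ j0 → x k = u k := by
      intro k hk; simp [hx, Function.update_of_ne hk]
    have hxj : x j0 = some (-psum u, b) := by simp [hx]
    have hpqx : pq x = t := by
      funext k
      by_cases hkj : k = j0
      · subst hkj
        simp [pq, mapWord, hxj, hb]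
      · rw [pq, mapWord, hxk k hkj]
        by_cases hki : k = i0
        · subst hki; simp [hui, hti]
        · have hks := huk k hki hkj
          have := (htu k (by simpa [pq, mapWord] using hks)).symm
          simpa [pq, mapWord] using this
    have hpsumx : psum x = 0 := by
      rw [psum, ← Finset.add_sum_erase _ _ (Finset.mem_univ j0)]
      rw [Finset.sum_congr rfl (fun k hk => by
        rw [hxk k (Finset.mem_erase.mp hk).1])]
      have h2' : psum u = ((u j0).map Prod.fst).getD 0
          + ∑ k ∈ Finset.univ.erase j0, ((u k).map Prod.fst).getD 0 :=
        (Finset.add_sum_erase _ _ (Finset.mem_univ j0)).symm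
      rw [huj] at h2'
      simp only [Option.map_none, Option.getD_none, zero_add] at h2'
      rw [hxj]
      simp [← h2']
    refine ⟨x, ⟨⟨by rw [hpqx]; exact htS, hpsumx⟩, ?_⟩, ?_⟩
    · intro k hk
      have hkj : k ≠ j0 := by rintro rfl; rw [huj] at hk; simp at hk
      exact hxk k hkj
    · rintro y ⟨⟨hy1, hy2⟩, hysub⟩
      have hpqy : pq y = t := htuniq (pq y) ⟨hy1, subFace_mapWord _ hysub⟩
      have htnone : ∀ k, k ≠ j0 → ¬ ((u k).isSome : Prop) → t k = none := by
        intro k hkj hks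
        have hkA : k ∈ A := by simp [hA, Option.not_isSome_iff_eq_none.mp hks]
        rw [hAij] at hkA
        simp only [Finset.mem_insert, Finset.mem_singleton] at hkA
        rcases hkA with h | h
        · rw [h]; exact hti
        · exact absurd h hkj
      have hyk : ∀ k, k ≠ j0 → y k = x k := by
        intro k hkj
        rw [hxk k hkj]
        by_cases hks : ((u k).isSome : Prop)
        · exact hysub k hks
        · have h1 : pq y k = none := by rw [hpqy, htnone k hkj hks]
          have hy0 : y k = none := by simpa [pq, mapWord] using h1
          rw [hy0, Option.not_isSome_iff_eq_none.mp hks]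
      -- y j0 = x j0 by the sum condition and the snd condition
      have hyjs : (y j0).isSome := by
        have : (pq y j0).isSome := by rw [hpqy]; exact htj
        simpa [pq, mapWord] using this
      obtain ⟨p, hp⟩ := Option.isSome_iff_exists.mp hyjs
      have hfst : ((y j0).map Prod.fst).getD 0 = ((x j0).map Prod.fst).getD 0 := by
        have e1 : psum y = ((y j0).map Prod.fst).getD 0
            + ∑ k ∈ Finset.univ.erase j0, ((y k).map Prod.fst).getD 0 :=
          (Finset.add_sum_erase _ _ (Finset.mem_univ j0)).symm
        have e2 : psum x = ((x j0).map Prod.fst).getD 0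
            + ∑ k ∈ Finset.univ.erase j0, ((x k).map Prod.fst).getD 0 :=
          (Finset.add_sum_erase _ _ (Finset.mem_univ j0)).symm
        have e3 : ∑ k ∈ Finset.univ.erase j0, ((y k).map Prod.fst).getD 0
            = ∑ k ∈ Finset.univ.erase j0, ((x k).map Prod.fst).getD 0 :=
          Finset.sum_congr rfl fun k hk => by rw [hyk k (Finset.mem_erase.mp hk).1]
        rw [hy2] at e1
        rw [hpsumx] at e2
        rw [e3] at e1
        have := e1.symm.trans e2
        exact add_right_cancel this
      have hsnd : (y j0).map Prod.snd = (x j0).map Prod.snd := by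
        have : pq y j0 = pq x j0 := by rw [hpqy, hpqx]
        simpa [pq, mapWord] using this
      funext k
      by_cases hkj : k = j0
      · subst hkj
        rw [hp, hxj] at hfst hsnd ⊢
        simp only [Option.map_some, Option.getD_some, Option.some.injEq] at hfst hsnd ⊢
        exact Prod.ext hfst hsnd
      · exact hyk k hkj

end HScale

theorem H_design_scale (n q : ℕ) (hn : 3 ≤ n) (hq : 1 ≤ q)
    (hex : ∃ S : Set (Fin n → Option (Fin q)), IsH n (n - 1) (n - 2) (Fin q) S) :
    ∀ s : ℕ, 1 ≤ s →
      ∃ S' : Set (Fin n → Option (Fin (s * q))), IsH n (n - 1) (n - 2) (Fin (s * q)) S' := by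
  intro s hs
  obtain ⟨S, hS⟩ := hex
  haveI : NeZero s := ⟨by omega⟩
  have hprod : IsH n (n - 1) (n - 2) (ZMod s × Fin q) (HScale.Sprod S) :=
    HScale.isH_prod hn hS
  have e : (ZMod s × Fin q) ≃ Fin (s * q) :=
    Fintype.equivFinOfCardEq (by simp [ZMod.card])
  exact ⟨_, HScale.isH_map e hprod⟩
end

section
/- If an A(n,q,w,t) design exists, then C(n−t,w−t)·q^{w−t} divides C(n,w)·q^w. -/
open Finset

def supp {n q : ℕ} (u : Fin n → Option (Fin q)) : Finset (Fin n) :=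
  Finset.univ.filter fun i => ((u i).isSome : Prop)

lemma mem_supp {n q : ℕ} {u : Fin n → Option (Fin q)} {i : Fin n} :
    i ∈ supp u ↔ (u i).isSome := by simp [supp]

lemma wt_eq {n q : ℕ} (u : Fin n → Option (Fin q)) : wt u = (supp u).card := rfl

instance {n : ℕ} {α : Type*} [DecidableEq α] (v u : Fin n → Option α) :
    Decidable (SubFace v u) := by unfold SubFace; infer_instance

lemma count_fiber {n q : ℕ} (w t : ℕ) (htw : t ≤ w)
    (s : Fin n → Option (Fin q)) (hs : wt s = t) :
    (Finset.univ.filter fun v : Fin n → Option (Fin q) => wt v = w ∧ SubFace v s).card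
      = Nat.choose (n - t) (w - t) * q ^ (w - t) := by
  classical
  set P : Finset (Fin n) := supp s with hP
  have hPcard : P.card = t := hs ▸ (wt_eq s)
  have hsub : ∀ v : Fin n → Option (Fin q), SubFace v s → P ⊆ supp v := by
    intro v hv i hi
    rw [mem_supp] at hi ⊢
    rw [hv i hi]; exact hi
  rw [Finset.card_eq_sum_card_fiberwise
      (f := fun v => supp v \ P) (t := Pᶜ.powersetCard (w - t)) ?_]
  · have hterm : ∀ A ∈ Pᶜ.powersetCard (w - t),
        ((Finset.univ.filter fun v : Fin n → Option (Fin q) => wt v = w ∧ SubFace v s).filter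
          (fun v => supp v \ P = A)).card = q ^ (w - t) := by
      intro A hA
      rw [mem_powersetCard] at hA
      obtain ⟨hAsub, hAcard⟩ := hA
      have hAP : Disjoint A P := by
        rw [Finset.disjoint_iff_ne]
        intro a ha b hb hab
        exact (Finset.mem_compl.mp (hAsub ha)) (hab ▸ hb)
      rw [Finset.card_bij'
        (i := fun v hv => fun a (ha : a ∈ A) => (v a).get (by
          simp only [mem_filter] at hv
          have : a ∈ supp v \ P := hv.2 ▸ ha
          exact mem_supp.mp (Finset.mem_sdiff.mp this).1))
        (j := fun p hp => fun i => if h : i ∈ A then some (p i h) else s i)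
        (t := A.pi fun _ => (Finset.univ : Finset (Fin q)))]
      · rw [Finset.card_pi]
        simp [hAcard, Finset.prod_const]
      · intro v hv
        simp [Finset.mem_pi]
      · -- j maps into the filter
        intro p hp
        simp only [mem_filter, mem_univ, true_and]
        set v : Fin n → Option (Fin q) := fun i => if h : i ∈ A then some (p i h) else s i with hvdef
        have hsupp : supp v = A ∪ P := by
          ext i
          rw [mem_supp]
          by_cases h : i ∈ A
          · simp [hvdef, h]
          · simp only [hvdef, dif_neg h, Finset.mem_union, h, false_or]
            exact ⟨fun hh => mem_supp.mpr hh, fun hh => mem_supp.mp hh⟩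
        have hsf : SubFace v s := by
          intro i hi
          have hiP : i ∈ P := mem_supp.mpr hi
          have : i ∉ A := Finset.disjoint_left.mp hAP.symm hiP
          simp [hvdef, this]
        refine ⟨⟨?_, hsf⟩, ?_⟩
        · rw [wt_eq, hsupp, Finset.card_union_of_disjoint hAP, hAcard, hPcard]
          omega
        · rw [hsupp, Finset.union_sdiff_right]
          exact Finset.sdiff_eq_self_of_disjoint hAP
      · -- left inverse
        intro v hv
        simp only [mem_filter] at hv
        funext i
        by_cases h : i ∈ A
        · simp only [dif_pos h]
          have : i ∈ supp v \ P := hv.2 ▸ h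
          have hi : (v i).isSome := mem_supp.mp (Finset.mem_sdiff.mp this).1
          exact (Option.some_get hi)
        · simp only [dif_neg h]
          by_cases hiP : i ∈ P
          · exact (hv.1.2.2 i (mem_supp.mp hiP)).symm
          · have : i ∉ supp v := by
              intro hc
              exact h (hv.2 ▸ Finset.mem_sdiff.mpr ⟨hc, hiP⟩)
            rw [mem_supp] at this hiP
            rw [Option.not_isSome_iff_eq_none] at this hiP
            rw [this, hiP]
      · -- right inverse
        intro p hp
        funext i hi
        simp [dif_pos hi]
    rw [Finset.sum_congr rfl hterm, Finset.sum_const, Finset.card_powersetCard,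
      Finset.card_compl, hPcard, Fintype.card_fin, smul_eq_mul]
  · intro v hv
    simp only [Finset.mem_coe, mem_filter, mem_univ, true_and] at hv ⊢
    rw [mem_powersetCard]
    constructor
    · intro a ha
      exact Finset.mem_compl.mpr (Finset.mem_sdiff.mp ha).2
    · rw [Finset.card_sdiff_of_subset (hsub v hv.2), hPcard, ← wt_eq, hv.1]

theorem A_design_necessary (n q w t : ℕ) (hwn : w ≤ n) (htw : t ≤ w) (ht : 1 ≤ t) (hq : 1 ≤ q)
    (hex : ∃ S : Set (Fin n → Option (Fin q)), IsA n w t (Fin q) S) :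
    Nat.choose (n - t) (w - t) * q ^ (w - t) ∣ Nat.choose n w * q ^ w := by
  classical
  obtain ⟨S, hS1, hS2⟩ := hex
  set V : Finset (Fin n → Option (Fin q)) :=
    Finset.univ.filter (fun v => wt v = w) with hV
  have htot : V.card = Nat.choose n w * q ^ w := by
    have h0 : wt (fun _ : Fin n => (none : Option (Fin q))) = 0 := by
      simp [wt]
    have := count_fiber (n := n) (q := q) w 0 (Nat.zero_le w)
      (fun _ => none) h0
    simp only [Nat.sub_zero] at this
    rw [← this, hV]
    congr 1
    apply Finset.filter_congr
    intro v _
    simp [SubFace]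
  set S' : Finset (Fin n → Option (Fin q)) := (Set.toFinite S).toFinset with hS'
  have hmemS' : ∀ s, s ∈ S' ↔ s ∈ S := fun s => (Set.toFinite S).mem_toFinset
  have hunion : V = S'.biUnion (fun s => V.filter (fun v => SubFace v s)) := by
    ext v
    simp only [Finset.mem_biUnion, Finset.mem_filter]
    constructor
    · intro hv
      have hw : wt v = w := by
        simp only [hV, Finset.mem_filter] at hv; exact hv.2
      obtain ⟨s, ⟨hsS, hsf⟩, _⟩ := hS2 v hw
      exact ⟨s, (hmemS' s).mpr hsS, hv, hsf⟩
    · rintro ⟨s, _, hv, _⟩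
      exact hv
  have hdisj : ∀ s₁ ∈ S', ∀ s₂ ∈ S', s₁ ≠ s₂ →
      Disjoint (V.filter (fun v => SubFace v s₁)) (V.filter (fun v => SubFace v s₂)) := by
    intro s₁ h1 s₂ h2 hne
    rw [Finset.disjoint_left]
    intro v hv1 hv2
    simp only [Finset.mem_filter, hV, Finset.mem_filter, Finset.mem_univ, true_and] at hv1 hv2
    obtain ⟨s, hs, huniq⟩ := hS2 v hv1.1
    exact hne ((huniq s₁ ⟨(hmemS' s₁).mp h1, hv1.2⟩).trans
      (huniq s₂ ⟨(hmemS' s₂).mp h2, hv2.2⟩).symm)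
  have hcard : V.card = S'.card * (Nat.choose (n - t) (w - t) * q ^ (w - t)) := by
    rw [hunion, Finset.card_biUnion hdisj]
    rw [Finset.sum_congr rfl (fun s hs => ?_), Finset.sum_const, smul_eq_mul]
    have hws : wt s = t := hS1 s ((hmemS' s).mp hs)
    rw [← count_fiber w t htw s hws]
    congr 1
    rw [hV, Finset.filter_filter]
  exact ⟨S'.card, by rw [← htot, hcard, Nat.mul_comm]⟩
end
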